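/- Let k : ℝ → ℝ be continuous with k(θ) > 0 for all θ ∈ [0, 2π], and suppose ∫₀^{2π} cos(θ)/k(θ) dθ = 0 and ∫₀^{2π} sin(θ)/k(θ) dθ = 0. Let f : ℝ → ℝ be continuous and set u(θ) = ∫₀^θ f(x)·sin(x) dx and v(θ) = ∫₀^θ f(x)·cos(x) dx. Assume u(2π) = 0, v(2π) = 0, and ∫₀^{2π} (v(θ)·sin(θ) − u(θ)·cos(θ))/k(θ) dθ = 0. Then ∫₀^{2π} f(θ)·(v(θ)·sin(θ) − u(θ)·cos(θ)) dθ ≤ 0. -/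

import Mathlib

open Real MeasureTheory AddCircle intervalIntegral
section parseval
variable {T : ℝ} [hT : Fact (0 < T)]

lemma parseval_aux (e : ℝ → ℝ) (he : Continuous e) (hper : e 0 = e T) :
    Summable (fun n : ℤ => ‖fourierCoeff (AddCircle.liftIco T 0 (fun x => (e x : ℂ))) n‖ ^ 2) ∧
    (∑' n : ℤ, ‖fourierCoeff (AddCircle.liftIco T 0 (fun x => (e x : ℂ))) n‖ ^ 2)
      = (1/T) * ∫ x in (0:ℝ)..T, (e x)^2 := by
  have hT0 : 0 < T := hT.out
  set F : ℝ → ℂ := fun x => (e x : ℂ) with hF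
  have hFc : Continuous F := Complex.continuous_ofReal.comp he
  have hFper : F 0 = F (0 + T) := by simp [hF, hper]
  have hGc : Continuous (AddCircle.liftIco T 0 F) :=
    AddCircle.liftIco_continuous hFper hFc.continuousOn
  set G : C(AddCircle T, ℂ) := ⟨_, hGc⟩ with hG
  set Glp : Lp ℂ 2 (@haarAddCircle T hT) :=
    ContinuousMap.toLp (E := ℂ) 2 haarAddCircle ℂ G with hGlp
  have hcoeff : ∀ n : ℤ, fourierCoeff (Glp : AddCircle T → ℂ) n
      = fourierCoeff (AddCircle.liftIco T 0 F) n := fun n => fourierCoeff_toLp G n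
  -- summability
  have hsumm : Summable (fun n : ℤ => ‖fourierCoeff (AddCircle.liftIco T 0 F) n‖ ^ 2) := by
    have h1 : Summable (fun n : ℤ => ‖(fourierBasis.repr Glp) n‖ ^ ((2:ENNReal)).toReal) :=
      (lp.memℓp (fourierBasis.repr Glp)).summable (by norm_num)
    have h2 : ∀ n : ℤ, ‖(fourierBasis.repr Glp) n‖ ^ ((2:ENNReal)).toReal
        = ‖fourierCoeff (AddCircle.liftIco T 0 F) n‖ ^ 2 := by
      intro n
      rw [fourierBasis_repr, hcoeff n]
      norm_num [Real.rpow_natCast]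
    exact (summable_congr h2).mp h1
  refine ⟨hsumm, ?_⟩
  -- Parseval
  have hpars := tsum_sq_fourierCoeff Glp
  have hcongr : (∑' n : ℤ, ‖fourierCoeff (AddCircle.liftIco T 0 F) n‖ ^ 2)
      = ∫ t : AddCircle T, ‖Glp t‖ ^ 2 ∂haarAddCircle := by
    rw [← hpars]; exact tsum_congr fun n => by rw [hcoeff n]
  rw [hcongr]
  -- replace Glp by G a.e.
  have hae : ∫ t : AddCircle T, ‖Glp t‖ ^ 2 ∂haarAddCircle
      = ∫ t : AddCircle T, ‖G t‖ ^ 2 ∂haarAddCircle := by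
    apply MeasureTheory.integral_congr_ae
    filter_upwards [ContinuousMap.coeFn_toLp (p := 2) (μ := haarAddCircle) (𝕜 := ℂ) G] with t ht
    rw [ht]
  rw [hae]
  -- haar vs volume
  have hvol : ∫ t : AddCircle T, ‖G t‖ ^ 2 ∂(volume : Measure (AddCircle T))
      = T * ∫ t : AddCircle T, ‖G t‖ ^ 2 ∂haarAddCircle := by
    rw [volume_eq_smul_haarAddCircle, MeasureTheory.integral_smul_measure, ENNReal.toReal_ofReal hT0.le,
      smul_eq_mul]
  -- interval integral
  have hint : ∫ x in (0:ℝ)..(0+T), ‖G (x : AddCircle T)‖ ^ 2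
      = ∫ t : AddCircle T, ‖G t‖ ^ 2 ∂(volume : Measure (AddCircle T)) :=
    AddCircle.intervalIntegral_preimage T 0 (fun t => ‖G t‖ ^ 2)
  have heq : ∀ x ∈ Set.uIcc (0:ℝ) T, ‖G (x : AddCircle T)‖ ^ 2 = (e x)^2 := by
    intro x hx
    rw [Set.uIcc_of_le hT0.le] at hx
    have hx' : x ∈ Set.Icc (0:ℝ) T := hx
    have : G (x : AddCircle T) = F x := by
      rcases eq_or_lt_of_le hx'.2 with h | h
      · have hx0 : ((x : ℝ) : AddCircle T) = ((0:ℝ) : AddCircle T) := by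
          rw [h]; simp [AddCircle.coe_period]
        rw [hG]
        simp only [ContinuousMap.coe_mk]
        rw [hx0, AddCircle.liftIco_coe_apply
          (Set.mem_Ico.mpr ⟨le_refl (0:ℝ), by simpa using hT0⟩)]
        rw [hFper, zero_add, h]
      · rw [hG]
        simp only [ContinuousMap.coe_mk]
        exact AddCircle.liftIco_coe_apply (by simpa using ⟨hx'.1, h⟩)
    rw [this, hF]
    simp [sq_abs, Complex.norm_real]
  have : (∫ x in (0:ℝ)..T, (e x)^2) = T * ∫ t : AddCircle T, ‖G t‖ ^ 2 ∂haarAddCircle := by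
    rw [← hvol, ← hint]
    rw [show (0:ℝ) + T = T by ring]
    exact intervalIntegral.integral_congr (fun x hx => (heq x hx).symm)
  rw [this]
  field_simp
end parseval

lemma wirtinger {h h' : ℝ → ℝ} (hd : ∀ x, HasDerivAt h (h' x) x) (hc' : Continuous h')
    (hper : h 0 = h (2*π)) (hper' : h' 0 = h' (2*π))
    (hmean : (∫ θ in (0:ℝ)..(2*π), h θ) = 0) :
    (∫ θ in (0:ℝ)..(2*π), (h θ)^2) ≤ ∫ θ in (0:ℝ)..(2*π), (h' θ)^2 := by
  have hT0 : 0 < 2*π := by positivity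
  haveI : Fact (0 < 2*π) := ⟨hT0⟩
  have hc : Continuous h := by
    apply continuous_iff_continuousAt.2 fun x => (hd x).continuousAt
  set F : ℝ → ℂ := fun x => (h x : ℂ) with hF
  set F' : ℝ → ℂ := fun x => (h' x : ℂ) with hF'
  set c : ℤ → ℂ := fun n => fourierCoeff (AddCircle.liftIco (2*π) 0 F) n with hcdef
  set c' : ℤ → ℂ := fun n => fourierCoeff (AddCircle.liftIco (2*π) 0 F') n with hc'def
  have hab : (0:ℝ) < 0 + 2*π := by linarith
  have hcoeff : ∀ n, c n = fourierCoeffOn hab F n := fun n =>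
    fourierCoeff_liftIco_eq (T := 2*π) F n
  have hcoeff' : ∀ n, c' n = fourierCoeffOn hab F' n := fun n =>
    fourierCoeff_liftIco_eq (T := 2*π) F' n
  have hterm : ∀ n : ℤ, ‖c n‖^2 ≤ ‖c' n‖^2 := by
    intro n
    rcases eq_or_ne n 0 with rfl | hn
    · have : c 0 = 0 := by
        rw [hcoeff, fourierCoeffOn_eq_integral]
        simp only [neg_zero, fourier_zero, one_smul, zero_add, sub_zero]
        have : (∫ x in (0:ℝ)..(2*π), F x) = ((∫ x in (0:ℝ)..(2*π), h x : ℝ) : ℂ) := by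
          rw [hF]
          exact RCLike.intervalIntegral_ofReal ..
        rw [this, hmean]
        simp
      rw [this]
      simp [sq_nonneg]
    · have hderiv : ∀ x ∈ Set.uIcc (0:ℝ) (0 + 2*π), HasDerivAt F (F' x) x :=
        fun x _ => (hd x).ofReal_comp
      have hint : IntervalIntegrable F' volume 0 (0 + 2*π) :=
        (Complex.continuous_ofReal.comp hc').intervalIntegrable _ _
      have heq := fourierCoeffOn_of_hasDerivAt hab hn hderiv hint
      have hFper : F (0 + 2*π) - F 0 = 0 := by
        rw [hF]; simp only [zero_add]
        rw [← hper]; ring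
      rw [hFper, mul_zero, zero_sub] at heq
      rw [← hcoeff, ← hcoeff'] at heq
      have hrel : c' n = Complex.I * n * c n := by
        rw [heq]
        have hn' : (n:ℂ) ≠ 0 := Int.cast_ne_zero.mpr hn
        have hπ : (π:ℂ) ≠ 0 := Complex.ofReal_ne_zero.mpr Real.pi_ne_zero
        have hI : Complex.I ≠ 0 := Complex.I_ne_zero
        push_cast
        field_simp
        ring
      rw [hrel]
      have h1 : (1:ℝ) ≤ |(n:ℝ)| := by
        rw [← Int.cast_abs]
        exact_mod_cast Int.one_le_abs hn
      have : ‖Complex.I * n * c n‖ = |(n:ℝ)| * ‖c n‖ := by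
        rw [norm_mul, norm_mul, Complex.norm_I, one_mul, Complex.norm_intCast]
      rw [this, mul_pow]
      nlinarith [sq_nonneg (‖c n‖), norm_nonneg (c n),
        mul_le_mul h1 h1 zero_le_one (abs_nonneg ((n:ℝ)))]
  obtain ⟨hs, hsum⟩ := parseval_aux (T := 2*π) h hc hper
  obtain ⟨hs', hsum'⟩ := parseval_aux (T := 2*π) h' hc' hper'
  have hts : (∑' n : ℤ, ‖c n‖^2) ≤ ∑' n : ℤ, ‖c' n‖^2 := Summable.tsum_le_tsum hterm hs hs'
  rw [hsum, hsum'] at hts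
  have h2 : 0 < 1/(2*π) := by positivity
  exact (mul_le_mul_iff_right₀ h2).mp hts

set_option maxHeartbeats 1000000 in
lemma key (ρ f u v : ℝ → ℝ) (hρc : Continuous ρ) (hρpos : ∀ θ, 0 < ρ θ)
    (hf : Continuous f)
    (hcos : (∫ θ in (0:ℝ)..(2*π), ρ θ * Real.cos θ) = 0)
    (hsin : (∫ θ in (0:ℝ)..(2*π), ρ θ * Real.sin θ) = 0)
    (hu : ∀ θ, u θ = ∫ x in (0:ℝ)..θ, f x * Real.sin x)
    (hv : ∀ θ, v θ = ∫ x in (0:ℝ)..θ, f x * Real.cos x)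
    (hu2 : u (2*π) = 0) (hv2 : v (2*π) = 0)
    (horth : (∫ θ in (0:ℝ)..(2*π), (v θ * Real.sin θ - u θ * Real.cos θ) * ρ θ) = 0) :
    (∫ θ in (0:ℝ)..(2*π), f θ * (v θ * Real.sin θ - u θ * Real.cos θ)) ≤ 0 := by
  have hπ : 0 < 2*π := by positivity
  -- primitives
  set X : ℝ → ℝ := fun θ => ∫ t in (0:ℝ)..θ, ρ t * Real.cos t with hXdef
  set Y : ℝ → ℝ := fun θ => ∫ t in (0:ℝ)..θ, ρ t * Real.sin t with hYdef
  have hX : ∀ θ, HasDerivAt X (ρ θ * Real.cos θ) θ := fun θ =>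
    ((hρc.mul Real.continuous_cos).integral_hasStrictDerivAt 0 θ).hasDerivAt
  have hY : ∀ θ, HasDerivAt Y (ρ θ * Real.sin θ) θ := fun θ =>
    ((hρc.mul Real.continuous_sin).integral_hasStrictDerivAt 0 θ).hasDerivAt
  have hud : ∀ θ, HasDerivAt u (f θ * Real.sin θ) θ := by
    intro θ
    rw [show u = fun θ => ∫ x in (0:ℝ)..θ, f x * Real.sin x from funext hu]
    exact ((hf.mul Real.continuous_sin).integral_hasStrictDerivAt 0 θ).hasDerivAt
  have hvd : ∀ θ, HasDerivAt v (f θ * Real.cos θ) θ := by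
    intro θ
    rw [show v = fun θ => ∫ x in (0:ℝ)..θ, f x * Real.cos x from funext hv]
    exact ((hf.mul Real.continuous_cos).integral_hasStrictDerivAt 0 θ).hasDerivAt
  have hXc : Continuous X := continuous_iff_continuousAt.2 fun θ => (hX θ).continuousAt
  have hYc : Continuous Y := continuous_iff_continuousAt.2 fun θ => (hY θ).continuousAt
  have huc : Continuous u := continuous_iff_continuousAt.2 fun θ => (hud θ).continuousAt
  have hvc : Continuous v := continuous_iff_continuousAt.2 fun θ => (hvd θ).continuousAt
  set p : ℝ → ℝ := fun θ => X θ * Real.sin θ - Y θ * Real.cos θ with hpdef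
  set q : ℝ → ℝ := fun θ => X θ * Real.cos θ + Y θ * Real.sin θ with hqdef
  set w : ℝ → ℝ := fun θ => v θ * Real.sin θ - u θ * Real.cos θ with hwdef
  set z : ℝ → ℝ := fun θ => u θ * Real.sin θ + v θ * Real.cos θ with hzdef
  have hpc : Continuous p := ((hXc.mul Real.continuous_sin).sub (hYc.mul Real.continuous_cos))
  have hqc : Continuous q := ((hXc.mul Real.continuous_cos).add (hYc.mul Real.continuous_sin))
  have hwc : Continuous w := ((hvc.mul Real.continuous_sin).sub (huc.mul Real.continuous_cos))
  have hzc : Continuous z := ((huc.mul Real.continuous_sin).add (hvc.mul Real.continuous_cos))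
  have hp : ∀ θ, HasDerivAt p (q θ) θ := by
    intro θ
    have := ((hX θ).mul (Real.hasDerivAt_sin θ)).sub ((hY θ).mul (Real.hasDerivAt_cos θ))
    refine this.congr_deriv (Eq.symm ?_)
    simp only [hqdef]
    ring
  have hq : ∀ θ, HasDerivAt q (ρ θ - p θ) θ := by
    intro θ
    have := ((hX θ).mul (Real.hasDerivAt_cos θ)).add ((hY θ).mul (Real.hasDerivAt_sin θ))
    refine this.congr_deriv (Eq.symm ?_)
    simp only [hpdef]
    have hsc := Real.sin_sq_add_cos_sq θ
    linear_combination (-(ρ θ)) * hsc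
  have hw : ∀ θ, HasDerivAt w (z θ) θ := by
    intro θ
    have := ((hvd θ).mul (Real.hasDerivAt_sin θ)).sub ((hud θ).mul (Real.hasDerivAt_cos θ))
    refine this.congr_deriv (Eq.symm ?_)
    simp only [hzdef]
    ring
  have hz : ∀ θ, HasDerivAt z (f θ - w θ) θ := by
    intro θ
    have := ((hud θ).mul (Real.hasDerivAt_sin θ)).add ((hvd θ).mul (Real.hasDerivAt_cos θ))
    refine this.congr_deriv (Eq.symm ?_)
    simp only [hwdef]
    have hsc := Real.sin_sq_add_cos_sq θ
    linear_combination (-(f θ)) * hsc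
  -- endpoint values
  have hX0 : X 0 = 0 := by simp [hXdef]
  have hY0 : Y 0 = 0 := by simp [hYdef]
  have hu0 : u 0 = 0 := by rw [hu]; simp
  have hv0 : v 0 = 0 := by rw [hv]; simp
  have hX2 : X (2*π) = 0 := hcos
  have hY2 : Y (2*π) = 0 := hsin
  have hp0 : p 0 = 0 := by simp [hpdef, hX0, hY0]
  have hq0 : q 0 = 0 := by simp [hqdef, hX0, hY0]
  have hp2 : p (2*π) = 0 := by simp [hpdef, hX2, hY2]
  have hq2 : q (2*π) = 0 := by simp [hqdef, hX2, hY2]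
  have hw0 : w 0 = 0 := by simp [hwdef, hu0, hv0]
  have hz0 : z 0 = 0 := by simp [hzdef, hu0, hv0]
  have hw2 : w (2*π) = 0 := by simp [hwdef, hu2, hv2]
  have hz2 : z (2*π) = 0 := by simp [hzdef, hu2, hv2]
  -- identity for p as convolution
  have hker : ∀ θ a b : ℝ, (∫ t in a..b, ρ t * Real.sin (θ - t))
      = Real.sin θ * (∫ t in a..b, ρ t * Real.cos t)
        - Real.cos θ * (∫ t in a..b, ρ t * Real.sin t) := by
    intro θ a b
    rw [← intervalIntegral.integral_const_mul, ← intervalIntegral.integral_const_mul,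
      ← intervalIntegral.integral_sub]
    · apply intervalIntegral.integral_congr
      intro t _
      simp only [Real.sin_sub]; ring
    · exact (continuous_const.mul (hρc.mul Real.continuous_cos)).intervalIntegrable _ _
    · exact (continuous_const.mul (hρc.mul Real.continuous_sin)).intervalIntegrable _ _
  have hPid : ∀ θ, p θ = ∫ t in (0:ℝ)..θ, ρ t * Real.sin (θ - t) := by
    intro θ
    rw [hker]
    simp only [hpdef, hXdef, hYdef]
    ring
  -- nonnegativity of p on [0, 2π]
  have hpnn : ∀ θ ∈ Set.Icc (0:ℝ) (2*π), 0 ≤ p θ := by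
    intro θ hθ
    rcases le_total θ π with hle | hge
    · rw [hPid θ]
      apply intervalIntegral.integral_nonneg hθ.1
      intro t ht
      exact mul_nonneg (hρpos t).le
        (Real.sin_nonneg_of_nonneg_of_le_pi (by linarith [ht.2]) (by linarith [ht.1]))
    · have htot : (∫ t in (0:ℝ)..(2*π), ρ t * Real.sin (θ - t)) = 0 := by
        rw [hker, hcos, hsin]; ring
      have hadd : (∫ t in (0:ℝ)..θ, ρ t * Real.sin (θ - t))
          + (∫ t in θ..(2*π), ρ t * Real.sin (θ - t))
          = ∫ t in (0:ℝ)..(2*π), ρ t * Real.sin (θ - t) := by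
        apply intervalIntegral.integral_add_adjacent_intervals <;>
          exact (Continuous.intervalIntegrable
            (hρc.mul (Real.continuous_sin.comp (continuous_const.sub continuous_id))) _ _)
      have h3 : (∫ t in θ..(2*π), ρ t * Real.sin (θ - t))
          = - ∫ t in θ..(2*π), ρ t * Real.sin (t - θ) := by
        rw [← intervalIntegral.integral_neg]
        apply intervalIntegral.integral_congr
        intro t _
        simp only [show θ - t = -(t - θ) by ring, Real.sin_neg]; ring
      have h2 : 0 ≤ ∫ t in θ..(2*π), ρ t * Real.sin (t - θ) := by
        apply intervalIntegral.integral_nonneg hθ.2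
        intro t ht
        exact mul_nonneg (hρpos t).le
          (Real.sin_nonneg_of_nonneg_of_le_pi (by linarith [ht.1]) (by linarith [ht.2]))
      rw [hPid θ]
      linarith [hadd, htot, h3]
  -- integrability helper
  have hInt : ∀ g : ℝ → ℝ, Continuous g → IntervalIntegrable g volume 0 (2*π) :=
    fun g hg => hg.intervalIntegrable _ _
  -- FTC : ∫ (ρ - p) = q(2π) - q(0) = 0
  have hFTCq : (∫ θ in (0:ℝ)..(2*π), (ρ θ - p θ)) = 0 := by
    rw [intervalIntegral.integral_eq_sub_of_hasDerivAt (fun θ _ => hq θ)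
      (hInt _ (hρc.sub hpc))]
    rw [hq2, hq0]; ring
  have hsubρp : (∫ θ in (0:ℝ)..(2*π), (ρ θ - p θ))
      = (∫ θ in (0:ℝ)..(2*π), ρ θ) - ∫ θ in (0:ℝ)..(2*π), p θ :=
    intervalIntegral.integral_sub (hInt _ hρc) (hInt _ hpc)
  have hIp : (∫ θ in (0:ℝ)..(2*π), p θ) = ∫ θ in (0:ℝ)..(2*π), ρ θ := by
    linarith [hFTCq, hsubρp]
  have hIρpos : 0 < ∫ θ in (0:ℝ)..(2*π), ρ θ :=
    intervalIntegral.intervalIntegral_pos_of_pos (hInt _ hρc) hρpos hπ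
  -- integration by parts
  have hparts : ∀ (g1 g2 g1' g2' : ℝ → ℝ), (∀ θ, HasDerivAt g1 (g1' θ) θ) →
      (∀ θ, HasDerivAt g2 (g2' θ) θ) → Continuous g1' → Continuous g2' →
      (∫ θ in (0:ℝ)..(2*π), g1 θ * g2' θ)
        = g1 (2*π) * g2 (2*π) - g1 0 * g2 0 - ∫ θ in (0:ℝ)..(2*π), g1' θ * g2 θ :=
    fun g1 g2 g1' g2' h1 h2 hc1 hc2 =>
      intervalIntegral.integral_mul_deriv_eq_deriv_mul (fun θ _ => h1 θ) (fun θ _ => h2 θ)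
        (hInt _ hc1) (hInt _ hc2)
  -- product splitting helper
  have hsplit2 : ∀ (g g1 g2 : ℝ → ℝ), Continuous g → Continuous g1 → Continuous g2 →
      (∫ θ in (0:ℝ)..(2*π), g θ * (g1 θ - g2 θ))
        = (∫ θ in (0:ℝ)..(2*π), g θ * g1 θ) - ∫ θ in (0:ℝ)..(2*π), g θ * g2 θ := by
    intro g g1 g2 hg hg1 hg2
    rw [← intervalIntegral.integral_sub (f := fun θ => g θ * g1 θ) (g := fun θ => g θ * g2 θ) (hInt _ (hg.mul hg1)) (hInt _ (hg.mul hg2))]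
    apply intervalIntegral.integral_congr
    intro t _
    simp only []; ring
  -- identity (1): ∫ q*q = ∫ p*p - ∫ p*ρ
  have hid1 : (∫ θ in (0:ℝ)..(2*π), q θ * q θ)
      = (∫ θ in (0:ℝ)..(2*π), p θ * p θ) - ∫ θ in (0:ℝ)..(2*π), p θ * ρ θ := by
    have h1 := hparts p q q (fun θ => ρ θ - p θ) hp hq hqc (hρc.sub hpc)
    rw [hp0, hp2, hq0, hq2, hsplit2 p ρ p hpc hρc hpc] at h1
    linarith [h1]
  -- identity (2): ∫ w*p = ∫ z*q   (uses horth)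
  have hid2 : (∫ θ in (0:ℝ)..(2*π), w θ * p θ) = ∫ θ in (0:ℝ)..(2*π), z θ * q θ := by
    have h1 := hparts w q z (fun θ => ρ θ - p θ) hw hq hzc (hρc.sub hpc)
    rw [hw0, hw2, hq0, hq2, hsplit2 w ρ p hwc hρc hpc] at h1
    have horth' : (∫ θ in (0:ℝ)..(2*π), w θ * ρ θ) = 0 := by
      have e : (∫ θ in (0:ℝ)..(2*π), w θ * ρ θ)
          = ∫ θ in (0:ℝ)..(2*π), (v θ * Real.sin θ - u θ * Real.cos θ) * ρ θ := by
        apply intervalIntegral.integral_congr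
        intro t _; simp only [hwdef]
      rw [e, horth]
    linarith [h1, horth']
  -- identity (3): goal integral = ∫ w*w - ∫ z*z
  have hid3 : (∫ θ in (0:ℝ)..(2*π), f θ * w θ)
      = (∫ θ in (0:ℝ)..(2*π), w θ * w θ) - ∫ θ in (0:ℝ)..(2*π), z θ * z θ := by
    have h1 := hparts w z z (fun θ => f θ - w θ) hw hz hzc (hf.sub hwc)
    rw [hw0, hw2, hz0, hz2, hsplit2 w f w hwc hf hwc] at h1
    have : (∫ θ in (0:ℝ)..(2*π), w θ * f θ) = ∫ θ in (0:ℝ)..(2*π), f θ * w θ := by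
      apply intervalIntegral.integral_congr
      intro t _; simp only []; ring
    linarith [h1, this]
  -- A = ∫ p*ρ ≥ 0
  have hA : 0 ≤ ∫ θ in (0:ℝ)..(2*π), p θ * ρ θ := by
    apply intervalIntegral.integral_nonneg hπ.le
    intro θ hθ
    exact mul_nonneg (hpnn θ hθ) (hρpos θ).le
  -- Wirtinger setup
  set m : ℝ := ∫ θ in (0:ℝ)..(2*π), ρ θ with hmdef
  set cW : ℝ := ∫ θ in (0:ℝ)..(2*π), w θ with hcWdef
  set h : ℝ → ℝ := fun θ => m * w θ - cW * p θ with hhdef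
  set h' : ℝ → ℝ := fun θ => m * z θ - cW * q θ with hh'def
  have hderiv : ∀ θ, HasDerivAt h (h' θ) θ := fun θ =>
    ((hw θ).const_mul m).sub ((hp θ).const_mul cW)
  have hh'c : Continuous h' := ((continuous_const.mul hzc).sub (continuous_const.mul hqc))
  have hper : h 0 = h (2*π) := by simp [hhdef, hw0, hw2, hp0, hp2]
  have hper' : h' 0 = h' (2*π) := by simp [hh'def, hz0, hz2, hq0, hq2]
  have hmean : (∫ θ in (0:ℝ)..(2*π), h θ) = 0 := by
    simp only [hhdef]
    rw [intervalIntegral.integral_sub (f := fun θ => m * w θ) (g := fun θ => cW * p θ) (hInt _ (continuous_const.mul hwc))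
      (hInt _ (continuous_const.mul hpc)), intervalIntegral.integral_const_mul,
      intervalIntegral.integral_const_mul, hIp]
    simp only [← hmdef, ← hcWdef]
    ring
  have hwir := wirtinger hderiv hh'c hper hper' hmean
  -- expansion of the squares
  have expand : ∀ (a b : ℝ) (g1 g2 : ℝ → ℝ), Continuous g1 → Continuous g2 →
      (∫ θ in (0:ℝ)..(2*π), (a * g1 θ - b * g2 θ)^2)
        = a^2 * (∫ θ in (0:ℝ)..(2*π), g1 θ * g1 θ)
          - 2*a*b*(∫ θ in (0:ℝ)..(2*π), g1 θ * g2 θ)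
          + b^2 * (∫ θ in (0:ℝ)..(2*π), g2 θ * g2 θ) := by
    intro a b g1 g2 hg1 hg2
    have e1 : (∫ θ in (0:ℝ)..(2*π), (a * g1 θ - b * g2 θ)^2)
        = ∫ θ in (0:ℝ)..(2*π),
            ((a^2 * (g1 θ * g1 θ) - 2*a*b*(g1 θ * g2 θ)) + b^2 * (g2 θ * g2 θ)) := by
      apply intervalIntegral.integral_congr
      intro t _
      simp only []; ring
    rw [e1, intervalIntegral.integral_add, intervalIntegral.integral_sub,
      intervalIntegral.integral_const_mul, intervalIntegral.integral_const_mul,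
      intervalIntegral.integral_const_mul]
    · exact hInt _ (continuous_const.mul (hg1.mul hg1))
    · exact hInt _ (continuous_const.mul (hg1.mul hg2))
    · exact hInt _ ((continuous_const.mul (hg1.mul hg1)).sub
        (continuous_const.mul (hg1.mul hg2)))
    · exact hInt _ (continuous_const.mul (hg2.mul hg2))
  have hew : (∫ θ in (0:ℝ)..(2*π), (h θ)^2)
      = m^2 * (∫ θ in (0:ℝ)..(2*π), w θ * w θ)
        - 2*m*cW*(∫ θ in (0:ℝ)..(2*π), w θ * p θ)
        + cW^2 * (∫ θ in (0:ℝ)..(2*π), p θ * p θ) := expand m cW w p hwc hpc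
  have hez : (∫ θ in (0:ℝ)..(2*π), (h' θ)^2)
      = m^2 * (∫ θ in (0:ℝ)..(2*π), z θ * z θ)
        - 2*m*cW*(∫ θ in (0:ℝ)..(2*π), z θ * q θ)
        + cW^2 * (∫ θ in (0:ℝ)..(2*π), q θ * q θ) := expand m cW z q hzc hqc
  rw [hew, hez] at hwir
  have hmid : 2*m*cW*(∫ θ in (0:ℝ)..(2*π), w θ * p θ)
      = 2*m*cW*(∫ θ in (0:ℝ)..(2*π), z θ * q θ) := by rw [hid2]
  have key2 : cW^2 * (∫ θ in (0:ℝ)..(2*π), q θ * q θ)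
      ≤ cW^2 * (∫ θ in (0:ℝ)..(2*π), p θ * p θ) :=
    mul_le_mul_of_nonneg_left (by linarith [hid1, hA]) (sq_nonneg cW)
  have key3 : m^2 * (∫ θ in (0:ℝ)..(2*π), w θ * w θ)
      ≤ m^2 * (∫ θ in (0:ℝ)..(2*π), z θ * z θ) := by linarith [hwir, hmid, key2]
  have hm2 : 0 < m^2 := pow_pos hIρpos 2
  have key4 : (∫ θ in (0:ℝ)..(2*π), w θ * w θ) ≤ ∫ θ in (0:ℝ)..(2*π), z θ * z θ :=
    (mul_le_mul_iff_right₀ hm2).mp key3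
  rw [hid3]
  linarith [key4]

/-- the boundary estimate (3.12) in the proof of Yau's infinitesimal rigidity of
Alexandrov's annuli. -/
theorem stmt_7 (k f : ℝ → ℝ) (hk : Continuous k)
    (hkpos : ∀ θ ∈ Set.Icc (0 : ℝ) (2 * π), 0 < k θ)
    (hcos : (∫ θ in (0 : ℝ)..(2 * π), Real.cos θ / k θ) = 0)
    (hsin : (∫ θ in (0 : ℝ)..(2 * π), Real.sin θ / k θ) = 0)
    (hf : Continuous f)
    (u v : ℝ → ℝ)
    (hu : ∀ θ, u θ = ∫ x in (0 : ℝ)..θ, f x * Real.sin x)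
    (hv : ∀ θ, v θ = ∫ x in (0 : ℝ)..θ, f x * Real.cos x)
    (hu2 : u (2 * π) = 0) (hv2 : v (2 * π) = 0)
    (horth : (∫ θ in (0 : ℝ)..(2 * π),
      (v θ * Real.sin θ - u θ * Real.cos θ) / k θ) = 0) :
    (∫ θ in (0 : ℝ)..(2 * π), f θ * (v θ * Real.sin θ - u θ * Real.cos θ)) ≤ 0 := by
  have hπ : 0 < 2*π := by positivity
  set ρ : ℝ → ℝ := fun θ => (k (min (max θ 0) (2*π)))⁻¹ with hρdef
  have hproj : ∀ θ : ℝ, min (max θ 0) (2*π) ∈ Set.Icc (0:ℝ) (2*π) := by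
    intro θ
    constructor
    · exact le_min (le_max_right θ 0) hπ.le
    · exact min_le_right _ _
  have hρc : Continuous ρ := by
    apply Continuous.inv₀
    · exact hk.comp ((continuous_id.max continuous_const).min continuous_const)
    · intro θ; exact (hkpos _ (hproj θ)).ne'
  have hρpos : ∀ θ, 0 < ρ θ := fun θ => inv_pos.mpr (hkpos _ (hproj θ))
  have hρeq : ∀ θ ∈ Set.uIcc (0:ℝ) (2*π), ρ θ = (k θ)⁻¹ := by
    intro θ hθ
    rw [Set.uIcc_of_le hπ.le] at hθ
    simp only [hρdef]
    rw [max_eq_left hθ.1, min_eq_left hθ.2]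
  have hcos' : (∫ θ in (0:ℝ)..(2*π), ρ θ * Real.cos θ) = 0 := by
    have e : (∫ θ in (0:ℝ)..(2*π), ρ θ * Real.cos θ)
        = ∫ θ in (0:ℝ)..(2*π), Real.cos θ / k θ := by
      apply intervalIntegral.integral_congr
      intro θ hθ
      simp only []
      rw [hρeq θ hθ, div_eq_mul_inv]
      ring
    rw [e, hcos]
  have hsin' : (∫ θ in (0:ℝ)..(2*π), ρ θ * Real.sin θ) = 0 := by
    have e : (∫ θ in (0:ℝ)..(2*π), ρ θ * Real.sin θ)
        = ∫ θ in (0:ℝ)..(2*π), Real.sin θ / k θ := by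
      apply intervalIntegral.integral_congr
      intro θ hθ
      simp only []
      rw [hρeq θ hθ, div_eq_mul_inv]
      ring
    rw [e, hsin]
  have horth' : (∫ θ in (0:ℝ)..(2*π), (v θ * Real.sin θ - u θ * Real.cos θ) * ρ θ) = 0 := by
    have e : (∫ θ in (0:ℝ)..(2*π), (v θ * Real.sin θ - u θ * Real.cos θ) * ρ θ)
        = ∫ θ in (0:ℝ)..(2*π), (v θ * Real.sin θ - u θ * Real.cos θ) / k θ := by
      apply intervalIntegral.integral_congr
      intro θ hθ
      simp only []
      rw [hρeq θ hθ, div_eq_mul_inv]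
    rw [e, horth]
  exact key ρ f u v hρc hρpos hf hcos' hsin' hu hv hu2 hv2 horth'
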